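/- A set-graph has no Pythagorean holes: in G_{A^(n)} with n ≥ 2, there do not exist three mutually adjacent vertices u, v, w with deg(u)² + deg(v)² = deg(w)². -/

import Mathlib

/-- The set-graph `G_{A^(n)}`: vertices are the nonempty subsets of an `n`-element set,
two distinct vertices being adjacent iff the corresponding subsets intersect. -/
def setGraph (n : ℕ) : SimpleGraph {S : Finset (Fin n) // S.Nonempty} where
  Adj S T := S ≠ T ∧ (S.1 ∩ T.1).Nonempty
  symm := ⟨fun S T h => ⟨h.1.symm, by
    obtain ⟨_, h2⟩ := h
    rwa [Finset.inter_comm]⟩⟩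
  loopless := ⟨fun S h => h.1 rfl⟩

instance (n : ℕ) : DecidableRel (setGraph n).Adj := fun S T =>
  inferInstanceAs (Decidable (S ≠ T ∧ (S.1 ∩ T.1).Nonempty))


lemma degree_setGraph (n : ℕ) (S : {S : Finset (Fin n) // S.Nonempty}) :
    (setGraph n).degree S = 2 ^ n - (2 ^ (n - S.1.card) + 1) := by
  classical
  have hcard : ((setGraph n).neighborFinset S).card
      = (Finset.univ.filter (fun T : Finset (Fin n) => T ≠ S.1 ∧ (S.1 ∩ T).Nonempty)).card := by
    apply Finset.card_bij (fun T _ => T.1)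
    · intro T hT
      rw [SimpleGraph.mem_neighborFinset] at hT
      simp only [Finset.mem_filter, Finset.mem_univ, true_and]
      exact ⟨fun h => hT.1 (Subtype.ext h.symm), hT.2⟩
    · intro a ha b hb h
      exact Subtype.ext h
    · intro T hT
      simp only [Finset.mem_filter, Finset.mem_univ, true_and] at hT
      have hTne : T.Nonempty := by
        obtain ⟨x, hx⟩ := hT.2
        exact ⟨x, (Finset.mem_inter.mp hx).2⟩
      refine ⟨⟨T, hTne⟩, ?_, rfl⟩
      rw [SimpleGraph.mem_neighborFinset]
      exact ⟨fun h => hT.1 (congrArg Subtype.val h).symm, hT.2⟩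
  rw [SimpleGraph.degree, hcard]
  have hcompl : Finset.univ.filter (fun T : Finset (Fin n) => ¬(T ≠ S.1 ∧ (S.1 ∩ T).Nonempty))
      = insert S.1 (S.1ᶜ.powerset) := by
    ext T
    simp only [Finset.mem_filter, Finset.mem_univ, true_and, not_and_or, not_ne_iff,
      Finset.not_nonempty_iff_eq_empty, Finset.mem_insert, Finset.mem_powerset]
    constructor
    · intro h
      by_cases hT : T = S.1
      · exact Or.inl hT
      · right
        intro x hx
        simp only [Finset.mem_compl]
        intro hxS
        rcases h with h1 | h2
        · exact hT h1
        · exact absurd (Finset.mem_inter.mpr ⟨hxS, hx⟩ : x ∈ S.1 ∩ T)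
            (by rw [h2]; exact Finset.notMem_empty x)
    · rintro (rfl | hsub)
      · exact Or.inl rfl
      · right
        rw [Finset.eq_empty_iff_forall_notMem]
        intro x hx
        have := Finset.mem_inter.mp hx
        exact (Finset.mem_compl.mp (hsub this.2)) this.1
  have hsum := Finset.card_filter_add_card_filter_not
    (s := (Finset.univ : Finset (Finset (Fin n))))
    (p := fun T : Finset (Fin n) => T ≠ S.1 ∧ (S.1 ∩ T).Nonempty)
  rw [hcompl] at hsum
  have hnotmem : S.1 ∉ S.1ᶜ.powerset := by
    rw [Finset.mem_powerset]
    intro h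
    obtain ⟨x, hx⟩ := S.2
    exact Finset.mem_compl.mp (h hx) hx
  rw [Finset.card_insert_of_notMem hnotmem, Finset.card_powerset, Finset.card_compl,
    Fintype.card_fin] at hsum
  have huniv : (Finset.univ : Finset (Finset (Fin n))).card = 2 ^ n := by
    rw [Finset.card_univ, Fintype.card_finset, Fintype.card_fin]
  rw [huniv] at hsum
  omega

lemma degree_sq_mod8 (n : ℕ) (hn : 2 ≤ n) (S : {S : Finset (Fin n) // S.Nonempty}) :
    (setGraph n).degree S ^ 2 % 8 = 1 ∨ (setGraph n).degree S ^ 2 % 8 = 4 := by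
  have hodd_sq : ∀ d : ℕ, d % 2 = 1 → d ^ 2 % 8 = 1 := by
    intro d hd
    obtain ⟨m, rfl⟩ : ∃ m, d = 2 * m + 1 := ⟨d / 2, by omega⟩
    obtain ⟨r, hr⟩ := Nat.even_mul_succ_self m
    have : (2 * m + 1) ^ 2 = 4 * (m * (m + 1)) + 1 := by ring
    omega
  rw [degree_setGraph]
  set s := S.1.card with hs
  have hs1 : 1 ≤ s := Finset.card_pos.mpr S.2
  have hsn : s ≤ n := by
    rw [hs]
    simpa using Finset.card_le_card (Finset.subset_univ S.1) |>.trans_eq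
      (by rw [Finset.card_univ, Fintype.card_fin])
  by_cases heq : s = n
  · -- full set: degree = 2^n - 2
    rw [heq, Nat.sub_self, pow_zero]
    have h1 : 2 ^ n - (1 + 1) = 2 * (2 ^ (n - 1) - 1) := by
      have : 2 ^ n = 2 * 2 ^ (n - 1) := by
        rw [← pow_succ']
        congr 1
        omega
      omega
    rw [h1]
    have hodd : 2 ^ (n - 1) - 1 = 2 * (2 ^ (n - 2)) - 1 := by
      congr 1
      rw [← pow_succ']
      congr 1
      omega
    right
    have h2 : (2 * (2 ^ (n - 1) - 1)) ^ 2 = 4 * (2 ^ (n - 1) - 1) ^ 2 := by ring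
    have h3 : (2 ^ (n - 1) - 1) ^ 2 % 8 = 1 := by
      apply hodd_sq
      have : 1 ≤ 2 ^ (n - 2) := Nat.one_le_two_pow
      omega
    omega
  · -- not full: degree is odd
    left
    apply hodd_sq
    have hlt : s < n := lt_of_le_of_ne hsn heq
    have h2n : 2 ^ n = 2 * 2 ^ (n - 1) := by
      rw [← pow_succ']; congr 1; omega
    have h2s : 2 ^ (n - s) = 2 * 2 ^ (n - s - 1) := by
      rw [← pow_succ']; congr 1; omega
    have hle : 2 ^ (n - s) ≤ 2 ^ (n - 1) := Nat.pow_le_pow_right (by norm_num) (by omega)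
    have hpos : 1 ≤ 2 ^ (n - s - 1) := Nat.one_le_two_pow
    omega

theorem stmt_6 (n : ℕ) (hn : 2 ≤ n) :
    ¬ ∃ u v w : {S : Finset (Fin n) // S.Nonempty},
      (setGraph n).Adj u v ∧ (setGraph n).Adj v w ∧ (setGraph n).Adj u w ∧
      (setGraph n).degree u ^ 2 + (setGraph n).degree v ^ 2 = (setGraph n).degree w ^ 2 := by
  rintro ⟨u, v, w, -, -, -, heq⟩
  have hu := degree_sq_mod8 n hn u
  have hv := degree_sq_mod8 n hn v
  have hw := degree_sq_mod8 n hn w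
  omega
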